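/- Shannon's theorem: Let E be an encryption scheme with |K| = |M| = |C| and perfect correctness. Then E is perfectly secure if and only if (1) for every message m and ciphertext c, the probability over uniform k that Enc(k,m) = c equals 1/|M|, and (2) for every message m and ciphertext c there exists a unique key k with Enc(k,m) = c. -/
import Mathlib

lemma card_filter_eq_one_of_existsUnique {α : Type} [Fintype α] [DecidableEq α]
    (p : α → Prop) [DecidablePred p] (h : ∃! a, p a) :
    (Finset.univ.filter p).card = 1 := by
  obtain ⟨a, ha, hu⟩ := h
  rw [Finset.card_eq_one]
  refine ⟨a, ?_⟩
  ext x
  simp only [Finset.mem_filter, Finset.mem_univ, true_and, Finset.mem_singleton]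
  exact ⟨fun hx => hu x hx, fun hx => hx ▸ ha⟩

/-- Shannon's theorem. -/
theorem shannon_theorem
    {K M C : Type} [Fintype K] [Fintype M] [Fintype C]
    [DecidableEq C]
    (Enc : K → M → C) (Dec : K → C → M)
    (correct : ∀ k m, Dec k (Enc k m) = m)
    (hKM : Fintype.card K = Fintype.card M)
    (hMC : Fintype.card M = Fintype.card C) :
    (∀ m₀ m₁ : M, ∀ c : C,
      (Finset.univ.filter (fun k : K => Enc k m₀ = c)).card
        = (Finset.univ.filter (fun k : K => Enc k m₁ = c)).card)
    ↔
    ((∀ m : M, ∀ c : C,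
        ((Finset.univ.filter (fun k : K => Enc k m = c)).card : ℚ)
          / (Fintype.card K : ℚ) = 1 / (Fintype.card M : ℚ)) ∧
      (∀ m : M, ∀ c : C, ∃! k : K, Enc k m = c)) := by
  constructor
  · intro h
    have hbij : ∀ k : K, Function.Bijective (fun m => Enc k m) := by
      intro k
      rw [Fintype.bijective_iff_injective_and_card]
      refine ⟨fun a b hab => ?_, hMC⟩
      have := congrArg (Dec k) hab
      simpa [correct] using this
    have key : ∀ (m : M) (c : C),
        (Finset.univ.filter (fun k : K => Enc k m = c)).card = 1 := by
      intro m c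
      have hinner : ∀ k : K,
          (Finset.univ.filter (fun m' : M => Enc k m' = c)).card = 1 := by
        intro k
        obtain ⟨m', hm'⟩ := (hbij k).surjective c
        rw [Finset.card_eq_one]
        refine ⟨m', ?_⟩
        ext x
        simp only [Finset.mem_filter, Finset.mem_univ, true_and, Finset.mem_singleton]
        exact ⟨fun hx => (hbij k).injective (hx.trans hm'.symm), fun hx => hx ▸ hm'⟩
      have hsum : ∑ m' : M, (Finset.univ.filter (fun k : K => Enc k m' = c)).card
          = Fintype.card K := by
        calc ∑ m' : M, (Finset.univ.filter (fun k : K => Enc k m' = c)).card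
            = ∑ m' : M, ∑ k : K, (if Enc k m' = c then 1 else 0) := by
              simp only [Finset.card_filter]
          _ = ∑ k : K, ∑ m' : M, (if Enc k m' = c then 1 else 0) := Finset.sum_comm
          _ = ∑ k : K, (Finset.univ.filter (fun m' : M => Enc k m' = c)).card := by
              simp only [Finset.card_filter]
          _ = Fintype.card K := by simp [hinner]
      have hconst : ∑ m' : M, (Finset.univ.filter (fun k : K => Enc k m' = c)).card
          = Fintype.card M * (Finset.univ.filter (fun k : K => Enc k m = c)).card := by
        rw [Finset.sum_congr rfl (fun m' _ => h m' m c), Finset.sum_const,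
          smul_eq_mul, Finset.card_univ]
      have hMpos : 0 < Fintype.card M := Fintype.card_pos_iff.mpr ⟨m⟩
      have : Fintype.card M * (Finset.univ.filter (fun k : K => Enc k m = c)).card
          = Fintype.card M * 1 := by
        rw [← hconst, hsum, hKM, mul_one]
      exact Nat.eq_of_mul_eq_mul_left hMpos this
    constructor
    · intro m c
      rw [key m c, hKM]
      norm_num
    · intro m c
      have := key m c
      rw [Finset.card_eq_one] at this
      obtain ⟨k, hk⟩ := this
      refine ⟨k, ?_, ?_⟩
      · have : k ∈ Finset.univ.filter (fun k : K => Enc k m = c) := by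
          rw [hk]; exact Finset.mem_singleton_self k
        simpa using this
      · intro k' hk'
        have : k' ∈ Finset.univ.filter (fun k : K => Enc k m = c) := by
          simp [hk']
        rw [hk] at this
        simpa using this
  · rintro ⟨h1, h2⟩ m₀ m₁ c
    classical
    rw [card_filter_eq_one_of_existsUnique _ (h2 m₀ c),
        card_filter_eq_one_of_existsUnique _ (h2 m₁ c)]
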